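/- Let (A, f) be an indecomposable finite-dimensional commutative Frobenius algebra over a field of characteristic 0 containing a nonzero nilpotent element. Then the Euler class e_{A,f} is nilpotent. -/

import Mathlib

open Polynomial

/-- In a finite-dimensional commutative algebra over a field with only trivial idempotents,
every element is nilpotent or a unit. -/
lemma aux_nilpotent_or_unit (K A : Type) [Field K] [CommRing A] [Algebra K A]
    [FiniteDimensional K A]
    (hind : ∀ x : A, IsIdempotentElem x → x = 0 ∨ x = 1) (a : A) :
    IsNilpotent a ∨ IsUnit a := by
  have hint : IsIntegral K a := IsIntegral.of_finite K a
  set p := minpoly K a with hp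
  have hp0 : p ≠ 0 := minpoly.ne_zero hint
  have hpa : aeval a p = 0 := minpoly.aeval K a
  by_cases hX : (X : K[X]) ∣ p
  · -- Bezout argument
    obtain ⟨q, hpeq, hndvd⟩ := Polynomial.exists_eq_pow_rootMultiplicity_mul_and_not_dvd p hp0 0
    rw [map_zero, sub_zero] at hndvd hpeq
    set n := p.rootMultiplicity 0 with hn
    have hnpos : 0 < n := (Polynomial.rootMultiplicity_pos hp0).mpr (by
      rw [Polynomial.IsRoot, ← Polynomial.coeff_zero_eq_eval_zero]
      exact Polynomial.X_dvd_iff.mp hX)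
    have hcop : IsCoprime ((X : K[X]) ^ n) q :=
      (((Polynomial.irreducible_X (R := K)).coprime_iff_not_dvd.mpr hndvd)).pow_left
    obtain ⟨s, t, hst⟩ := hcop
    set x : A := aeval a (s * X ^ n) with hx
    have hmul : x * aeval a (t * q) = 0 := by
      have : (s * X ^ n) * (t * q) = (s * t) * p := by rw [hpeq]; ring
      rw [hx, ← map_mul, this, map_mul, hpa, mul_zero]
    have hadd : x + aeval a (t * q) = 1 := by
      rw [hx, ← map_add, hst, map_one]
    have hidem : IsIdempotentElem x := by
      have : x * x = x * (1 - aeval a (t * q)) := by rw [← hadd]; ring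
      rw [IsIdempotentElem, this, mul_sub, mul_one, hmul, sub_zero]
    rcases hind x hidem with h0 | h1
    · -- x = 0, so aeval a (t*q) = 1, so q(a) is a unit, and a^n = 0
      left
      refine ⟨n, ?_⟩
      have h1 : aeval a (t * q) = 1 := by rw [← hadd, h0, zero_add]
      have h2 : a ^ n * aeval a q = 0 := by
        have : aeval a (X ^ n * q) = 0 := by rw [← hpeq, hpa]
        rwa [map_mul, map_pow, aeval_X] at this
      calc a ^ n = a ^ n * (aeval a (t * q)) := by rw [h1, mul_one]
      _ = (a ^ n * aeval a q) * aeval a t := by rw [map_mul]; ring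
      _ = 0 := by rw [h2, zero_mul]
    · -- x = 1 : s(a) * a^n = 1
      right
      have : a * (aeval a s * a ^ (n - 1)) = 1 := by
        have := h1
        rw [hx, map_mul, map_pow, aeval_X] at this
        calc a * (aeval a s * a ^ (n - 1)) = aeval a s * (a * a ^ (n-1)) := by ring
        _ = aeval a s * a ^ (n - 1 + 1) := by rw [pow_succ']
        _ = aeval a s * a ^ n := by rw [Nat.sub_add_cancel hnpos]
        _ = 1 := this
      exact IsUnit.of_mul_eq_one _ this
  · -- constant coefficient nonzero, a is a unit
    right
    have hc : p.coeff 0 ≠ 0 := fun h => hX (Polynomial.X_dvd_iff.mpr h)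
    have h1 : aeval a (p.divX) * a + algebraMap K A (p.coeff 0) = 0 := by
      have := hpa
      conv_lhs at this => rw [← Polynomial.divX_mul_X_add p]
      rw [map_add, map_mul, aeval_X, aeval_C] at this
      exact this
    have : a * (-(p.coeff 0)⁻¹ • aeval a p.divX) = 1 := by
      have h2 : a * aeval a p.divX = -(algebraMap K A (p.coeff 0)) := by
        linear_combination h1
      rw [mul_smul_comm, h2, neg_smul, smul_neg, neg_neg, Algebra.smul_def, ← map_mul,
        inv_mul_cancel₀ hc, map_one]
    exact IsUnit.of_mul_eq_one _ this

theorem euler_class_nilpotent_of_indecomposable (K A : Type) [Field K] [CharZero K]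
    [CommRing A] [Algebra K A] [FiniteDimensional K A] [Nontrivial A]
    (hind : ∀ x : A, IsIdempotentElem x → x = 0 ∨ x = 1)
    (f : A →ₗ[K] K)
    (hf : ∀ a : A, (∀ b : A, f (a * b) = 0) → a = 0)
    (u : A) (hu : u ≠ 0) (hunil : IsNilpotent u)
    (ι : Type) [Fintype ι] [DecidableEq ι] (e : Module.Basis ι K A) (d : ι → A)
    (hd : ∀ i j, f (e i * d j) = if i = j then (1 : K) else 0) :
    IsNilpotent (∑ i, e i * d i) := by
  set E := ∑ i, e i * d i with hE
  -- coordinates via f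
  have hrepr : ∀ (x : A) (i : ι), f (x * d i) = e.repr x i := by
    intro x i
    have hmaps : f.comp (LinearMap.mulRight K (d i)) = e.coord i := by
      apply e.ext
      intro j
      simp only [LinearMap.comp_apply, LinearMap.mulRight_apply, Module.Basis.coord_apply,
        Module.Basis.repr_self, Finsupp.single_apply]
      rw [hd j i]
    have := congrFun (congrArg DFunLike.coe hmaps) x
    simpa using this
  -- trace formula
  have htrace : ∀ a : A, LinearMap.trace K A (LinearMap.mulLeft K a) = f (a * E) := by
    intro a
    rw [LinearMap.trace_eq_matrix_trace K e, Matrix.trace]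
    have : ∀ i, (LinearMap.toMatrix e e (LinearMap.mulLeft K a)).diag i
        = f (a * e i * d i) := by
      intro i
      rw [Matrix.diag_apply, LinearMap.toMatrix_apply, LinearMap.mulLeft_apply, ← hrepr]
    rw [Finset.sum_congr rfl (fun i _ => this i)]
    rw [hE, Finset.mul_sum, map_sum]
    exact Finset.sum_congr rfl (fun i _ => by rw [mul_assoc])
  rcases aux_nilpotent_or_unit K A hind E with h | h
  · exact h
  · exfalso
    apply hu
    have huE : u * E = 0 := by
      apply hf
      intro b
      have hnil : IsNilpotent (LinearMap.mulLeft K (u * b)) := by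
        obtain ⟨n, hn⟩ := hunil
        exact ⟨n, by
          rw [LinearMap.pow_mulLeft]
          have h0 : (u * b) ^ n = 0 := by
            rw [mul_pow, hn, zero_mul]
          rw [h0, LinearMap.mulLeft_zero_eq_zero]⟩
      have := LinearMap.isNilpotent_trace_of_isNilpotent hnil
      have h0 : LinearMap.trace K A (LinearMap.mulLeft K (u * b)) = 0 :=
        this.eq_zero
      rw [htrace] at h0
      calc f (u * E * b) = f (u * b * E) := by ring_nf
      _ = 0 := h0
    obtain ⟨v, hv⟩ := h.exists_right_inv
    calc u = u * (E * v) := by rw [hv, mul_one]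
    _ = (u * E) * v := by ring
    _ = 0 := by rw [huE, zero_mul]
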